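/- Two 𝒜-trees T₁ and T₂ are ancestrally compatible (there exists an 𝒜-tree that ancestrally displays both) if and only if they have a common weak 𝒜-supertree, that is, if and only if there exist weak topological embeddings of T₁ and of T₂ into a same 𝒜-tree. -/

import Mathlib

/-!
Common framework: rooted labeled trees ("𝒜-trees") following Llabrés–Rocha–Rosselló–Valiente.

A `PreTree α V` is the raw data of a directed graph on (a finite subset of) `V` together with
a partial labeling of its nodes by labels in `α`.  The predicate `PreTree.IsATree` asserts that
this data is a finite rooted tree (the root reaches every node by a unique directed path),
that the labeling is injective, and that every leaf is labeled.
-/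

structure PreTree (α : Type) (V : Type) where
  nodes : Set V
  arc : V → V → Prop
  label : V → Option α

namespace PreTree

variable {α V W : Type}

/-- There is a directed path from `u` to `v` (possibly trivial). -/
def path (T : PreTree α V) (u v : V) : Prop := Relation.ReflTransGen T.arc u v

/-- There is a non-trivial directed path (length ≥ 1) from `u` to `v`. -/
def pathNT (T : PreTree α V) (u v : V) : Prop := Relation.TransGen T.arc u v

/-- `𝒜(T)`: the set of labels of all nodes of `T`. -/
def labelSet (T : PreTree α V) : Set α := {a | ∃ v, T.label v = some a}

/-- `𝒜_T(v)`: the cluster of `v`, i.e. the set of labels of all descendants of `v`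
(including `v` itself). -/
def cluster (T : PreTree α V) (v : V) : Set α := {a | ∃ w, T.path v w ∧ T.label w = some a}

/-- `𝒞_𝒜(T)`: the cluster representation of `T`. -/
def clusterRep (T : PreTree α V) : Set (Set α) := {C | ∃ v ∈ T.nodes, T.cluster v = C}

/-- A leaf is a node without children. -/
def IsLeaf (T : PreTree α V) (v : V) : Prop := v ∈ T.nodes ∧ ∀ w, ¬ T.arc v w

/-- `ℒ(T)`: the set of labels of the leaves of `T`. -/
def leafLabels (T : PreTree α V) : Set α := {a | ∃ v, T.IsLeaf v ∧ T.label v = some a}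

/-- A node is elementary when it has exactly one child. -/
def IsElementary (T : PreTree α V) (v : V) : Prop := ∃! w, T.arc v w

/-- `T` is an 𝒜-tree: a finite rooted tree (every node reachable from the root by a unique
directed path, which is captured by unique parents, acyclicity and reachability from a root)
with an injective partial labeling such that every leaf is labeled. -/
structure IsATree (T : PreTree α V) : Prop where
  finite_nodes : T.nodes.Finite
  arc_mem_left : ∀ {u v : V}, T.arc u v → u ∈ T.nodes
  arc_mem_right : ∀ {u v : V}, T.arc u v → v ∈ T.nodes
  parent_unique : ∀ {u v w : V}, T.arc u w → T.arc v w → u = v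
  acyclic : ∀ {u v : V}, T.arc u v → ¬ T.path v u
  rooted : T.nodes.Nonempty → ∃ r ∈ T.nodes, ∀ v ∈ T.nodes, T.path r v
  label_mem : ∀ {v : V} {a : α}, T.label v = some a → v ∈ T.nodes
  label_inj : ∀ {u v : V} {a : α}, T.label u = some a → T.label v = some a → u = v
  leaf_labeled : ∀ v ∈ T.nodes, (∀ w, ¬ T.arc v w) → ∃ a, T.label v = some a

/-- A semi-labeled tree over `𝒜` is an 𝒜-tree all of whose elementary nodes are labeled. -/
def IsSemiLabeled (T : PreTree α V) : Prop :=
  T.IsATree ∧ ∀ v ∈ T.nodes, T.IsElementary v → ∃ a, T.label v = some a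

open Classical in
/-- The restriction `T|X`: the subtree of `T` induced on the nodes whose cluster meets `X`,
keeping exactly the labels that belong to `X`. -/
noncomputable def restrict (T : PreTree α V) (X : Set α) : PreTree α V where
  nodes := {v | v ∈ T.nodes ∧ (T.cluster v ∩ X).Nonempty}
  arc u v := T.arc u v ∧ (T.cluster u ∩ X).Nonempty ∧ (T.cluster v ∩ X).Nonempty
  label v := if (∃ a ∈ X, T.label v = some a) then T.label v else none

/-- A weak topological embedding `f : S → T`: an injective map on nodes which preserves labels
and preserves and reflects directed paths. -/
def IsWTE (S : PreTree α V) (T : PreTree α W) (f : V → W) : Prop :=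
  (∀ v ∈ S.nodes, f v ∈ T.nodes) ∧
  (∀ u ∈ S.nodes, ∀ v ∈ S.nodes, f u = f v → u = v) ∧
  (∀ (v : V) (a : α), S.label v = some a → T.label (f v) = some a) ∧
  (∀ u ∈ S.nodes, ∀ v ∈ S.nodes, (S.path u v ↔ T.path (f u) (f v)))

/-- Two 𝒜-trees are ancestrally compatible when they admit weak topological embeddings into
a same 𝒜-tree. -/
def AncCompat (T₁ : PreTree α V) (T₂ : PreTree α W) : Prop :=
  ∃ (U : Type) (T : PreTree α U), T.IsATree ∧ (∃ f, IsWTE T₁ T f) ∧ (∃ g, IsWTE T₂ T g)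

/-- `m` is the most recent common ancestor of `x` and `y` in `T`. -/
def IsMRCA (T : PreTree α V) (x y m : V) : Prop :=
  T.path m x ∧ T.path m y ∧ ∀ n, T.path n x → T.path n y → T.path n m

/-- Local compatibility: condition (C1) on pairs of common labels and condition (C2)
on triples of common labels. -/
def LocallyCompatible (T₁ : PreTree α V) (T₂ : PreTree α W) : Prop :=
  (∀ (a b : α) (x₁ y₁ : V) (x₂ y₂ : W),
      T₁.label x₁ = some a → T₁.label y₁ = some b →
      T₂.label x₂ = some a → T₂.label y₂ = some b →
      (T₁.path x₁ y₁ ↔ T₂.path x₂ y₂)) ∧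
  (∀ (a b c : α) (va₁ vb₁ vc₁ m₁ m₁' : V) (va₂ vb₂ vc₂ m₂ m₂' : W),
      T₁.label va₁ = some a → T₁.label vb₁ = some b → T₁.label vc₁ = some c →
      T₂.label va₂ = some a → T₂.label vb₂ = some b → T₂.label vc₂ = some c →
      IsMRCA T₁ vb₁ vc₁ m₁ → IsMRCA T₁ va₁ vb₁ m₁' →
      IsMRCA T₂ va₂ vb₂ m₂ → IsMRCA T₂ vb₂ vc₂ m₂' →
      T₁.pathNT m₁ m₁' → ¬ T₂.pathNT m₂ m₂')

/-- `T` ancestrally displays `S`. -/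
def Displays (T : PreTree α W) (S : PreTree α V) : Prop :=
  S.labelSet ⊆ T.labelSet ∧
  (∀ (a b : α) (x y : V) (x' y' : W),
      S.label x = some a → S.label y = some b →
      T.label x' = some a → T.label y' = some b →
      (S.path x y ↔ T.path x' y')) ∧
  S.clusterRep ⊆ (T.restrict S.labelSet).clusterRep

/-- An unlabeled elementary node. -/
def ElemUnlab (T : PreTree α V) (v : V) : Prop := T.label v = none ∧ T.IsElementary v

/-- The semi-labeled tree obtained from `S` by removing its unlabeled elementary nodes and
replacing by single arcs the maximal paths all of whose intermediate nodes are unlabeled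
and elementary. -/
def contract (S : PreTree α V) : PreTree α V where
  nodes := {v | v ∈ S.nodes ∧ ¬ ElemUnlab S v}
  arc u v := (u ∈ S.nodes ∧ ¬ ElemUnlab S u) ∧ (v ∈ S.nodes ∧ ¬ ElemUnlab S v) ∧
    ∃ l : List V, List.Chain' S.arc (u :: (l ++ [v])) ∧ ∀ m ∈ l, ElemUnlab S m
  label := S.label

/-- `X` is the smallest member of the family `R` containing the label `a`. -/
def SmallestContaining (R : Set (Set α)) (a : α) (X : Set α) : Prop :=
  X ∈ R ∧ a ∈ X ∧ ∀ Y ∈ R, a ∈ Y → X ⊆ Y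

/-- `m_{ℓ,Y}`: the number of nodes of `T` whose cluster is `Y`. -/
noncomputable def mcount (T : PreTree α V) (Y : Set α) : ℕ :=
  {v | v ∈ T.nodes ∧ T.cluster v = Y}.ncard

/-- `𝒞 = 𝒞_𝒜(T₁) ∪ 𝒞_𝒜(T₂)`. -/
def joinC (T₁ : PreTree α V) (T₂ : PreTree α W) : Set (Set α) :=
  T₁.clusterRep ∪ T₂.clusterRep

/-- `n_Y = max (m_{1,Y}, m_{2,Y})`. -/
noncomputable def joinN (T₁ : PreTree α V) (T₂ : PreTree α W) (Y : Set α) : ℕ :=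
  max (mcount T₁ Y) (mcount T₂ Y)

open Classical in
/-- The join `T_{1,2}` of two 𝒜-trees with the same label set: nodes are the pairs
`w_{Y,j} = (Y, j)` with `Y ∈ 𝒞` and `1 ≤ j ≤ n_Y`, with the chain arcs `(w_{Y,j}, w_{Y,j-1})`
and the arcs `(w_{Y,1}, w_{Z,n_Z})` for `Z ⊊ Y` maximal in `𝒞`, and `w_{Y,1}` labeled `A`
exactly when `Y = (⋃ {Z ∈ 𝒞 ∣ Z ⊊ Y}) ⊔ {A}`. -/
noncomputable def join (T₁ : PreTree α V) (T₂ : PreTree α W) : PreTree α (Set α × ℕ) where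
  nodes := {p | p.1 ∈ joinC T₁ T₂ ∧ 1 ≤ p.2 ∧ p.2 ≤ joinN T₁ T₂ p.1}
  arc p q := p.1 ∈ joinC T₁ T₂ ∧ q.1 ∈ joinC T₁ T₂ ∧
    ((q.1 = p.1 ∧ p.2 = q.2 + 1 ∧ 1 ≤ q.2 ∧ p.2 ≤ joinN T₁ T₂ p.1) ∨
     (p.2 = 1 ∧ q.1 ⊂ p.1 ∧ q.2 = joinN T₁ T₂ q.1 ∧ 1 ≤ q.2 ∧
       ¬ ∃ Z ∈ joinC T₁ T₂, q.1 ⊂ Z ∧ Z ⊂ p.1))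
  label p :=
    if h : p.2 = 1 ∧ p.1 ∈ joinC T₁ T₂ ∧
        ∃ a : α, a ∉ ⋃₀ {Z ∈ joinC T₁ T₂ | Z ⊂ p.1} ∧
          p.1 = (⋃₀ {Z ∈ joinC T₁ T₂ | Z ⊂ p.1}) ∪ {a}
    then some h.2.2.choose else none

/-- The canonical map `f_ℓ : V(T_ℓ) → V(T_{1,2})`, sending the `i`-th node (from the bottom)
of the chain of nodes of `T` with cluster `Y` to `w_{Y,i}`. -/
noncomputable def joinMap (T : PreTree α V) (v : V) : Set α × ℕ :=
  (T.cluster v, {u | u ∈ T.nodes ∧ T.cluster u = T.cluster v ∧ T.pathNT v u}.ncard + 1)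


section Helpers

variable {T : PreTree α V}


lemma path_refl (T : PreTree α V) (v : V) : T.path v v := Relation.ReflTransGen.refl

lemma path_trans {u v w : V} (h : T.path u v) (h' : T.path v w) : T.path u w := h.trans h'

lemma mem_of_path {u v : V} (hT : T.IsATree) (h : T.path u v) (hu : u ∈ T.nodes) :
    v ∈ T.nodes := by
  rcases h.cases_tail with rfl | ⟨c, _, hc⟩
  · exact hu
  · exact hT.arc_mem_right hc

lemma path_antisymm (hT : T.IsATree) {u v : V} (h : T.path u v) (h' : T.path v u) : u = v := by
  rcases Relation.ReflTransGen.cases_head h with rfl | ⟨m, hm, hmv⟩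
  · rfl
  · exact (hT.acyclic hm (hmv.trans h')).elim

lemma pathNT_irrefl (hT : T.IsATree) {v : V} (h : T.pathNT v v) : False := by
  rcases (Relation.TransGen.head'_iff).1 h with ⟨m, hm, hmv⟩
  exact hT.acyclic hm hmv

lemma pathNT_of_path_ne (hT : T.IsATree) {u v : V} (h : T.path u v) (hne : u ≠ v) :
    T.pathNT u v := by
  rcases (Relation.reflTransGen_iff_eq_or_transGen.1 h) with rfl | h'
  · exact absurd rfl hne
  · exact h'

lemma path_of_pathNT {u v : V} (h : T.pathNT u v) : T.path u v := h.to_reflTransGen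

lemma cluster_antitone {u v : V} (h : T.path u v) : T.cluster v ⊆ T.cluster u := by
  rintro a ⟨w, hw, hl⟩
  exact ⟨w, h.trans hw, hl⟩

lemma anc_comparable (hT : T.IsATree) {u v x : V} (hu : T.path u x) (hv : T.path v x) :
    T.path u v ∨ T.path v u := by
  induction hv using Relation.ReflTransGen.head_induction_on with
  | refl => exact Or.inl hu
  | head hbc hcx ih =>
    rename_i b c
    rcases ih with h | h
    · -- T.path u c, T.arc b c
      rcases h.cases_tail with rfl | ⟨d, hud, hdc⟩
      · exact Or.inr (Relation.ReflTransGen.single hbc)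
      · exact Or.inl (hT.parent_unique hdc hbc ▸ hud)
    · exact Or.inr (Relation.ReflTransGen.head hbc h)

lemma exists_labeled_desc (hT : T.IsATree) : ∀ v ∈ T.nodes, ∃ w a, T.path v w ∧ T.label w = some a := by
  have key : ∀ n : ℕ, ∀ v ∈ T.nodes, {w | T.pathNT v w}.ncard = n →
      ∃ w a, T.path v w ∧ T.label w = some a := by
    intro n
    induction n using Nat.strong_induction_on with
    | _ n ih =>
      intro v hv hcard
      by_cases hleaf : ∀ w, ¬ T.arc v w
      · obtain ⟨a, ha⟩ := hT.leaf_labeled v hv hleaf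
        exact ⟨v, a, Relation.ReflTransGen.refl, ha⟩
      · push_neg at hleaf
        obtain ⟨c, hc⟩ := hleaf
        have hfinset : ∀ x : V, {w | T.pathNT x w}.Finite := fun x =>
          hT.finite_nodes.subset (fun w hw => by
            obtain ⟨c', _, hc'⟩ := (Relation.TransGen.tail'_iff).1 hw
            exact hT.arc_mem_right hc')
        have hsub : {w | T.pathNT c w} ⊆ {w | T.pathNT v w} := fun w hw =>
          Relation.TransGen.head hc hw
        have hmemv : c ∈ {w | T.pathNT v w} := Relation.TransGen.single hc
        have hmemc : c ∉ {w | T.pathNT c w} := fun h => pathNT_irrefl hT h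
        have hlt : {w | T.pathNT c w}.ncard < {w | T.pathNT v w}.ncard := by
          have h1 : insert c {w | T.pathNT c w} ⊆ {w | T.pathNT v w} := by
            rw [Set.insert_subset_iff]; exact ⟨hmemv, hsub⟩
          calc {w | T.pathNT c w}.ncard < (insert c {w | T.pathNT c w}).ncard := by
                rw [Set.ncard_insert_of_notMem hmemc (hfinset c)]; omega
            _ ≤ {w | T.pathNT v w}.ncard := Set.ncard_le_ncard h1 (hfinset v)
        obtain ⟨w, a, hpw, hla⟩ := ih _ (hcard ▸ hlt) c (hT.arc_mem_right hc) rfl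
        exact ⟨w, a, Relation.ReflTransGen.head hc hpw, hla⟩
  intro v hv
  exact key _ v hv rfl

/-! restrict lemmas -/

lemma restrict_path_imp {X : Set α} {u w : V} (h : (T.restrict X).path u w) : T.path u w :=
  Relation.ReflTransGen.mono (r := (T.restrict X).arc) (p := T.arc) (fun _ _ hr => hr.1) _ _ h

lemma restrict_label_iff {X : Set α} {w : V} {a : α} :
    (T.restrict X).label w = some a ↔ T.label w = some a ∧ a ∈ X := by
  classical
  simp only [restrict]
  split_ifs with h
  · constructor
    · intro hl
      obtain ⟨a', ha', hla'⟩ := h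
      refine ⟨hl, ?_⟩
      rw [hl] at hla'
      simpa using (Option.some_injective α (hla'.symm) ▸ ha' : a ∈ X)
    · exact fun h' => h'.1
  · constructor
    · intro h'; simp at h'
    · intro h'; exact absurd ⟨a, h'.2, h'.1⟩ h

lemma restrict_path_of {X : Set α} {u w : V} {a : α} (hp : T.path u w)
    (hl : T.label w = some a) (ha : a ∈ X) : (T.restrict X).path u w := by
  induction hp using Relation.ReflTransGen.head_induction_on with
  | refl => exact Relation.ReflTransGen.refl
  | head hbc hcx ih =>
    rename_i b c
    refine Relation.ReflTransGen.head ⟨hbc, ⟨a, ⟨w, Relation.ReflTransGen.head hbc hcx, hl⟩, ha⟩,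
      ⟨a, ⟨w, hcx, hl⟩, ha⟩⟩ ih

lemma restrict_cluster {X : Set α} {v : V} :
    (T.restrict X).cluster v = T.cluster v ∩ X := by
  ext a
  constructor
  · rintro ⟨w, hp, hl⟩
    obtain ⟨hl', haX⟩ := restrict_label_iff.1 hl
    exact ⟨⟨w, restrict_path_imp hp, hl'⟩, haX⟩
  · rintro ⟨⟨w, hp, hl⟩, haX⟩
    exact ⟨w, restrict_path_of hp hl haX, restrict_label_iff.2 ⟨hl, haX⟩⟩

/-- The deepest node whose cluster contains a given nonempty set realized in the tree. -/
lemma exists_min_candidate (hT : T.IsATree) {s : Set α} {a : α} (ha : a ∈ s)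
    (hne : ∃ t ∈ T.nodes, s ⊆ T.cluster t) :
    ∃ t ∈ T.nodes, s ⊆ T.cluster t ∧ ∀ t' ∈ T.nodes, s ⊆ T.cluster t' → T.path t' t := by
  classical
  set cand := {t | t ∈ T.nodes ∧ s ⊆ T.cluster t} with hcand
  have hfin : cand.Finite := hT.finite_nodes.subset (fun t ht => ht.1)
  have hcne : cand.Nonempty := by obtain ⟨t, ht, hs⟩ := hne; exact ⟨t, ht, hs⟩
  -- the labeled node for a
  obtain ⟨t₀, ht₀, hs₀⟩ := hne
  obtain ⟨wa, hpa, hla⟩ := hs₀ ha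
  -- every candidate has a path to wa
  have hto : ∀ t ∈ cand, T.path t wa := by
    rintro t ⟨htm, hts⟩
    obtain ⟨w', hp', hl'⟩ := hts ha
    rwa [hT.label_inj hl' hla] at hp'
  have hcomp : ∀ t ∈ cand, ∀ t' ∈ cand, T.path t t' ∨ T.path t' t := fun t ht t' ht' =>
    anc_comparable hT (hto t ht) (hto t' ht')
  -- descendant sets
  have hdesc_fin : ∀ t : V, t ∈ T.nodes → {w | T.path t w}.Finite := fun t htm =>
    hT.finite_nodes.subset (fun w hw => mem_of_path hT hw htm)
  obtain ⟨t, htc, hmin⟩ := hfin.exists_minimalFor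
    (fun t => {w | T.path t w}.ncard) cand hcne
  refine ⟨t, htc.1, htc.2, ?_⟩
  intro t' ht' hst'
  have ht'c : t' ∈ cand := ⟨ht', hst'⟩
  rcases hcomp t htc t' ht'c with h | h
  · -- path t t' : then desc t' ⊆ desc t, ncard t' ≤ ncard t, minimality gives equality
    have hsub : {w | T.path t' w} ⊆ {w | T.path t w} := fun w hw => h.trans hw
    have hle : {w | T.path t' w}.ncard ≤ {w | T.path t w}.ncard :=
      Set.ncard_le_ncard hsub (hdesc_fin t htc.1)
    have heq := le_antisymm (hmin ht'c hle) hle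
    have h2 : {w | T.path t' w}.ncard = {w | T.path t w}.ncard := heq.symm
    have hseq : {w | T.path t' w} = {w | T.path t w} :=
      Set.eq_of_subset_of_ncard_le hsub (le_of_eq h2.symm) (hdesc_fin t htc.1)
    have : t ∈ {w | T.path t' w} := by rw [hseq]; exact Relation.ReflTransGen.refl
    exact this
  · exact h

/-! The blow-up of a tree along a multiplicity function. -/

def blowup (T : PreTree α V) (n : V → ℕ) : PreTree α (V × ℕ) where
  nodes := {p | p.1 ∈ T.nodes ∧ 1 ≤ p.2 ∧ p.2 ≤ n p.1}
  arc p q := (p.1 ∈ T.nodes ∧ 1 ≤ p.2 ∧ p.2 ≤ n p.1) ∧ (q.1 ∈ T.nodes ∧ 1 ≤ q.2 ∧ q.2 ≤ n q.1) ∧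
    ((p.1 = q.1 ∧ p.2 = q.2 + 1) ∨ (p.2 = 1 ∧ q.2 = n q.1 ∧ T.arc p.1 q.1))
  label p := if p.2 = 1 then T.label p.1 else none

variable {n : V → ℕ}

lemma blowup_path_spec (hT : T.IsATree) {p q : V × ℕ} (h : (blowup T n).path p q) :
    T.path p.1 q.1 ∧ (p.1 = q.1 → q.2 ≤ p.2) := by
  induction h using Relation.ReflTransGen.head_induction_on with
  | refl => exact ⟨Relation.ReflTransGen.refl, fun _ => le_refl _⟩
  | head hbc hcx ih =>
    rename_i b c
    obtain ⟨_, _, harc⟩ := hbc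
    rcases harc with ⟨heq1, heq2⟩ | ⟨hb1, hcn, harc⟩
    · refine ⟨heq1 ▸ ih.1, fun hbq => ?_⟩
      have := ih.2 (heq1 ▸ hbq)
      omega
    · refine ⟨Relation.ReflTransGen.head harc ih.1, fun hbq => ?_⟩
      exact absurd (hbq ▸ ih.1) (hT.acyclic harc)

lemma mem_blowup {t : V} {i : ℕ} (ht : t ∈ T.nodes) (h1 : 1 ≤ i) (h2 : i ≤ n t) :
    (t, i) ∈ (blowup T n).nodes := ⟨ht, h1, h2⟩

lemma blowup_path_down {t : V} (ht : t ∈ T.nodes) :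
    ∀ i j : ℕ, 1 ≤ j → j ≤ i → i ≤ n t → (blowup T n).path (t, i) (t, j) := by
  have key : ∀ d : ℕ, ∀ j, 1 ≤ j → j + d ≤ n t → (blowup T n).path (t, j + d) (t, j) := by
    intro d
    induction d with
    | zero => intro j _ _; exact Relation.ReflTransGen.refl
    | succ d ih =>
      intro j hj hle
      have hle1 : j + (d + 1) ≤ n t := hle
      have hle2 : j + d ≤ n t := by omega
      have harc : (blowup T n).arc (t, j + (d+1)) (t, j + d) :=
        ⟨⟨ht, by omega, hle1⟩, ⟨ht, by omega, hle2⟩, Or.inl ⟨rfl, by omega⟩⟩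
      exact Relation.ReflTransGen.head harc (ih j hj hle2)
  intro i j hj hji hi
  have : i = j + (i - j) := by omega
  rw [this]
  exact key (i - j) j hj (by omega)

lemma blowup_path_of_pathNT (hT : T.IsATree) (hn1 : ∀ t, 1 ≤ n t) {t t' : V}
    (h : T.pathNT t t') :
    ∀ i j : ℕ, 1 ≤ i → i ≤ n t → 1 ≤ j → j ≤ n t' → (blowup T n).path (t, i) (t', j) := by
  induction h using Relation.TransGen.head_induction_on with
  | single harc =>
    rename_i b
    intro i j hi hni hj hnj
    have hb := hT.arc_mem_left harc
    have hb' := hT.arc_mem_right harc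
    have h1 : (blowup T n).path (b, i) (b, 1) := blowup_path_down hb i 1 le_rfl hi hni
    have h2 : (blowup T n).arc (b, 1) (t', n t') :=
      ⟨⟨hb, le_rfl, hi.trans hni⟩, ⟨hb', hn1 t', le_rfl⟩, Or.inr ⟨rfl, rfl, harc⟩⟩
    have h3 : (blowup T n).path (t', n t') (t', j) := blowup_path_down hb' (n t') j hj hnj le_rfl
    exact (h1.tail h2).trans h3
  | head harc hcx ih =>
    rename_i b c
    intro i j hi hni hj hnj
    have hb := hT.arc_mem_left harc
    have hc := hT.arc_mem_right harc
    have h1 : (blowup T n).path (b, i) (b, 1) := blowup_path_down hb i 1 le_rfl hi hni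
    have h2 : (blowup T n).arc (b, 1) (c, n c) :=
      ⟨⟨hb, le_rfl, hi.trans hni⟩, ⟨hc, hn1 c, le_rfl⟩, Or.inr ⟨rfl, rfl, harc⟩⟩
    have h3 := ih (n c) j (hn1 c) le_rfl hj hnj
    exact (h1.tail h2).trans h3

lemma blowup_path_general (hT : T.IsATree) (hn1 : ∀ t, 1 ≤ n t) {t t' : V}
    (h : T.path t t') (ht : t ∈ T.nodes) {i j : ℕ} (hi : 1 ≤ i) (hni : i ≤ n t)
    (hj : 1 ≤ j) (hnj : j ≤ n t') (hij : t = t' → j ≤ i) :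
    (blowup T n).path (t, i) (t', j) := by
  by_cases heq : t = t'
  · subst heq
    exact blowup_path_down ht i j hj (hij rfl) hni
  · exact blowup_path_of_pathNT hT hn1 (pathNT_of_path_ne hT h heq) i j hi hni hj hnj

lemma blowup_isATree (hT : T.IsATree) (hn1 : ∀ t, 1 ≤ n t) : (blowup T n).IsATree := by
  constructor
  · -- finite
    have hsub : (blowup T n).nodes ⊆ ⋃ t ∈ T.nodes, {t} ×ˢ Set.Icc 1 (n t) := by
      rintro ⟨t, j⟩ ⟨ht, h1, h2⟩
      simp only [Set.mem_iUnion]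
      exact ⟨t, ht, by simp [Set.mem_prod, h1, h2]⟩
    exact (hT.finite_nodes.biUnion (fun t _ => (Set.finite_singleton t).prod (Set.finite_Icc _ _))).subset hsub
  · rintro u v ⟨hu, _, _⟩; exact hu
  · rintro u v ⟨_, hv, _⟩; exact hv
  · -- parent_unique
    rintro u v w ⟨hu, hw, harc₁⟩ ⟨hv, _, harc₂⟩
    rcases harc₁ with ⟨he1, he2⟩ | ⟨hu1, hwn, ha1⟩ <;> rcases harc₂ with ⟨hf1, hf2⟩ | ⟨hv1, hwn', ha2⟩
    · have : u.1 = v.1 := he1.trans hf1.symm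
      have : u.2 = v.2 := by omega
      exact Prod.ext ‹u.1 = v.1› ‹u.2 = v.2›
    · -- u chain parent, v cross parent: w.2 + 1 ≤ n w.1 vs w.2 = n w.1
      exfalso
      have h1 : u.2 ≤ n u.1 := hu.2.2
      rw [he1] at h1
      omega
    · exfalso
      have h1 : v.2 ≤ n v.1 := hv.2.2
      rw [hf1] at h1
      omega
    · have h1 : u.1 = v.1 := hT.parent_unique ha1 ha2
      exact Prod.ext h1 (hu1.trans hv1.symm)
  · -- acyclic
    rintro u v ⟨hu, hv, harc⟩ hpath
    obtain ⟨hp1, hp2⟩ := blowup_path_spec hT hpath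
    rcases harc with ⟨he1, he2⟩ | ⟨hu1, hvn, ha⟩
    · have := hp2 he1.symm
      omega
    · exact hT.acyclic ha hp1
  · -- rooted
    rintro ⟨⟨t, j⟩, ht, h1, h2⟩
    obtain ⟨r, hr, hroot⟩ := hT.rooted ⟨t, ht⟩
    refine ⟨(r, n r), ⟨hr, hn1 r, le_rfl⟩, ?_⟩
    rintro ⟨s, k⟩ ⟨hs, hk1, hk2⟩
    exact blowup_path_general hT hn1 (hroot s hs) hr (hn1 r) le_rfl hk1 hk2
      (fun h => by rw [h]; exact hk2)
  · -- label_mem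
    rintro ⟨t, j⟩ a hl
    simp only [blowup] at hl
    split_ifs at hl with h
    · exact ⟨hT.label_mem hl, by omega, h ▸ hn1 t⟩
  · -- label_inj
    rintro ⟨t, j⟩ ⟨s, k⟩ a hl₁ hl₂
    simp only [blowup] at hl₁ hl₂
    split_ifs at hl₁ with h₁
    split_ifs at hl₂ with h₂
    exact Prod.ext (hT.label_inj hl₁ hl₂) (by omega)
  · -- leaf_labeled
    rintro ⟨t, j⟩ ⟨ht, h1, h2⟩ hleaf
    have h1' : 1 ≤ j := h1
    have h2' : j ≤ n t := h2
    have hj1 : j = 1 := by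
      by_contra hne
      exact hleaf (t, j - 1) ⟨⟨ht, h1, h2⟩, ⟨ht, (by omega : (1:ℕ) ≤ j - 1), (by omega : j - 1 ≤ n t)⟩, Or.inl ⟨rfl, by omega⟩⟩
    have hTleaf : ∀ s, ¬ T.arc t s := by
      intro s hs
      exact hleaf (s, n s) ⟨⟨ht, h1, h2⟩, ⟨hT.arc_mem_right hs, hn1 s, le_rfl⟩,
        Or.inr ⟨hj1, rfl, hs⟩⟩
    obtain ⟨a, ha⟩ := hT.leaf_labeled t ht hTleaf
    exact ⟨a, by simp only [blowup, hj1]; simpa using ha⟩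


/-! ### Backward direction: a weak embedding target displays the tree. -/

lemma displays_of_wte {U : Type} {T : PreTree α U} {S : PreTree α V} {f : V → U}
    (hT : T.IsATree) (hS : S.IsATree) (hf : IsWTE S T f) : Displays T S := by
  obtain ⟨hmem, hinj, hlab, hpath⟩ := hf
  refine ⟨?_, ?_, ?_⟩
  · rintro a ⟨v, hv⟩
    exact ⟨f v, hlab v a hv⟩
  · intro a b x y x' y' hx hy hx' hy'
    have hxm : x ∈ S.nodes := hS.label_mem hx
    have hym : y ∈ S.nodes := hS.label_mem hy
    have e1 : x' = f x := hT.label_inj hx' (hlab x a hx)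
    have e2 : y' = f y := hT.label_inj hy' (hlab y b hy)
    rw [e1, e2]
    exact hpath x hxm y hym
  · rintro C ⟨v, hv, rfl⟩
    refine ⟨f v, ⟨hmem v hv, ?_⟩, ?_⟩
    · -- cluster of f v meets S.labelSet
      obtain ⟨w, a, hpw, hlw⟩ := exists_labeled_desc hS v hv
      have hwm : w ∈ S.nodes := mem_of_path hS hpw hv
      exact ⟨a, ⟨f w, (hpath v hv w hwm).1 hpw, hlab w a hlw⟩, ⟨w, hlw⟩⟩
    · rw [restrict_cluster]
      ext a
      constructor
      · rintro ⟨⟨w, hpw, hlw⟩, x, hx⟩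
        have hxm : x ∈ S.nodes := hS.label_mem hx
        have hwx : w = f x := hT.label_inj hlw (hlab x a hx)
        rw [hwx] at hpw
        have : S.path v x := (hpath v hv x hxm).2 hpw
        exact ⟨x, this, hx⟩
      · rintro ⟨w, hpw, hlw⟩
        have hwm : w ∈ S.nodes := mem_of_path hS hpw hv
        exact ⟨⟨f w, (hpath v hv w hwm).1 hpw, hlab w a hlw⟩, ⟨w, hlw⟩⟩

/-! ### Forward direction: construction of a common weak supertree from a displaying tree. -/

/-- Rank of a node from the bottom of its chain of equal-cluster nodes. -/
noncomputable def rnk (T₁ : PreTree α V) (v : V) : ℕ :=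
  {u | u ∈ T₁.nodes ∧ T₁.cluster u = T₁.cluster v ∧ T₁.pathNT v u}.ncard + 1

lemma rnk_pos (T₁ : PreTree α V) (v : V) : 1 ≤ rnk T₁ v := by simp [rnk]

lemma rnk_lt {T₁ : PreTree α V} (h₁ : T₁.IsATree) {u v : V} (hu : u ∈ T₁.nodes)
    (hv : v ∈ T₁.nodes) (hC : T₁.cluster u = T₁.cluster v) (hp : T₁.pathNT u v) :
    rnk T₁ v < rnk T₁ u := by
  have hfin : ∀ x : V, {w | w ∈ T₁.nodes ∧ T₁.cluster w = T₁.cluster x ∧ T₁.pathNT x w}.Finite :=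
    fun x => h₁.finite_nodes.subset (fun w hw => hw.1)
  have hsub : insert v {w | w ∈ T₁.nodes ∧ T₁.cluster w = T₁.cluster v ∧ T₁.pathNT v w} ⊆
      {w | w ∈ T₁.nodes ∧ T₁.cluster w = T₁.cluster u ∧ T₁.pathNT u w} := by
    rintro w hw
    rcases hw with rfl | ⟨hwm, hwc, hwp⟩
    · exact ⟨hv, hC.symm, hp⟩
    · exact ⟨hwm, hwc.trans hC.symm, hp.trans hwp⟩
  have hvm : v ∉ {w | w ∈ T₁.nodes ∧ T₁.cluster w = T₁.cluster v ∧ T₁.pathNT v w} := by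
    rintro ⟨_, _, hvv⟩
    exact pathNT_irrefl h₁ hvv
  have := Set.ncard_le_ncard hsub (hfin u)
  rw [Set.ncard_insert_of_notMem hvm (hfin v)] at this
  simp only [rnk]
  omega

lemma rnk_labeled {T₁ : PreTree α V} (h₁ : T₁.IsATree) {v : V} {a : α}
    (hl : T₁.label v = some a) : rnk T₁ v = 1 := by
  have : {u | u ∈ T₁.nodes ∧ T₁.cluster u = T₁.cluster v ∧ T₁.pathNT v u} = ∅ := by
    ext u
    simp only [Set.mem_setOf_eq, Set.mem_empty_iff_false, iff_false, not_and]
    rintro hum hC hp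
    have hav : a ∈ T₁.cluster v := ⟨v, Relation.ReflTransGen.refl, hl⟩
    have hau : a ∈ T₁.cluster u := hC ▸ hav
    obtain ⟨w, hw, hlw⟩ := hau
    have : w = v := h₁.label_inj hlw hl
    subst this
    exact pathNT_irrefl h₁ (Relation.TransGen.trans_right hw hp)
  simp [rnk, this]

/-- The specification of the canonical attachment map. -/
def TmSpec (T₁ : PreTree α V) (T : PreTree α U) (tm : V → U) : Prop :=
  ∀ v ∈ T₁.nodes,
    tm v ∈ T.nodes ∧
    T.cluster (tm v) ∩ T₁.labelSet = T₁.cluster v ∧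
    (∀ t' ∈ T.nodes, T₁.cluster v ⊆ T.cluster t' → T.path t' (tm v)) ∧
    (∀ a, T₁.label v = some a → T.label (tm v) = some a)

lemma tm_eq_of_cluster_eq {T₁ : PreTree α V} {T : PreTree α U} {tm : V → U}
    (hT : T.IsATree) (hs : TmSpec T₁ T tm) {u v : V} (hu : u ∈ T₁.nodes) (hv : v ∈ T₁.nodes)
    (hC : T₁.cluster u = T₁.cluster v) : tm u = tm v := by
  obtain ⟨hm₁, hc₁, hmin₁, _⟩ := hs u hu
  obtain ⟨hm₂, hc₂, hmin₂, _⟩ := hs v hv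
  have h₁ : T.path (tm u) (tm v) := hmin₂ (tm u) hm₁ (by rw [← hC, ← hc₁]; exact Set.inter_subset_left)
  have h₂ : T.path (tm v) (tm u) := hmin₁ (tm v) hm₂ (by rw [hC, ← hc₂]; exact Set.inter_subset_left)
  exact path_antisymm hT h₁ h₂

lemma rnk_le_count {T₁ : PreTree α V} {T : PreTree α U} {tm : V → U}
    (hT : T.IsATree) (h₁ : T₁.IsATree) (hs : TmSpec T₁ T tm) {v : V} (hv : v ∈ T₁.nodes) :
    rnk T₁ v ≤ {u | u ∈ T₁.nodes ∧ tm u = tm v}.ncard := by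
  have hfin : {u | u ∈ T₁.nodes ∧ tm u = tm v}.Finite :=
    h₁.finite_nodes.subset (fun u hu => hu.1)
  have hsub : insert v {u | u ∈ T₁.nodes ∧ T₁.cluster u = T₁.cluster v ∧ T₁.pathNT v u} ⊆
      {u | u ∈ T₁.nodes ∧ tm u = tm v} := by
    rintro u hu
    rcases hu with rfl | ⟨hum, hC, _⟩
    · exact ⟨hv, rfl⟩
    · exact ⟨hum, tm_eq_of_cluster_eq hT hs hum hv hC⟩
  have hvm : v ∉ {u | u ∈ T₁.nodes ∧ T₁.cluster u = T₁.cluster v ∧ T₁.pathNT v u} := by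
    rintro ⟨_, _, hvv⟩
    exact pathNT_irrefl h₁ hvv
  have h1 := Set.ncard_le_ncard hsub hfin
  rw [Set.ncard_insert_of_notMem hvm (h₁.finite_nodes.subset (fun u hu => hu.1))] at h1
  simp only [rnk]
  omega

lemma cluster_subset_labelSet (T₁ : PreTree α V) (v : V) : T₁.cluster v ⊆ T₁.labelSet := by
  rintro a ⟨w, _, hl⟩
  exact ⟨w, hl⟩

lemma exists_tmap {T₁ : PreTree α V} {T : PreTree α U} (hT : T.IsATree) (h₁ : T₁.IsATree)
    (hd : Displays T T₁) {t₀ : U} (ht₀ : t₀ ∈ T.nodes) : ∃ tm : V → U, TmSpec T₁ T tm := by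
  obtain ⟨hd1, hd2, hd3⟩ := hd
  have key : ∀ v : V, ∃ t : U, v ∈ T₁.nodes →
      (t ∈ T.nodes ∧ T.cluster t ∩ T₁.labelSet = T₁.cluster v ∧
        (∀ t' ∈ T.nodes, T₁.cluster v ⊆ T.cluster t' → T.path t' t) ∧
        (∀ a, T₁.label v = some a → T.label t = some a)) := by
    intro v
    by_cases hv : v ∈ T₁.nodes
    swap
    · exact ⟨t₀, fun h => absurd h hv⟩
    obtain ⟨w₀, a₀, hp₀, hl₀⟩ := exists_labeled_desc h₁ v hv
    have ha₀ : a₀ ∈ T₁.cluster v := ⟨w₀, hp₀, hl₀⟩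
    -- a realizing node from the display hypothesis
    obtain ⟨t', ht', hct'⟩ := hd3 ⟨v, hv, rfl⟩
    have ht'm : t' ∈ T.nodes := ht'.1
    rw [restrict_cluster] at hct'
    have hsub' : T₁.cluster v ⊆ T.cluster t' := by rw [← hct']; exact Set.inter_subset_left
    obtain ⟨t, htm, hsub, hmin⟩ := exists_min_candidate hT ha₀ ⟨t', ht'm, hsub'⟩
    refine ⟨t, fun _ => ⟨htm, ?_, hmin, ?_⟩⟩
    · apply Set.Subset.antisymm
      · have h1 : T.path t' t := hmin t' ht'm hsub'
        intro a ha
        have : a ∈ T.cluster t' ∩ T₁.labelSet := ⟨cluster_antitone h1 ha.1, ha.2⟩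
        rwa [hct'] at this
      · intro a ha
        exact ⟨hsub ha, cluster_subset_labelSet T₁ v ha⟩
    · -- labeled node case
      intro a hl
      obtain ⟨na, hna⟩ : a ∈ T.labelSet := hd1 ⟨v, hl⟩
      have hcand : T₁.cluster v ⊆ T.cluster na := by
        rintro b ⟨w, hw, hlw⟩
        obtain ⟨nb, hnb⟩ : b ∈ T.labelSet := hd1 ⟨w, hlw⟩
        have := (hd2 a b v w na nb hl hlw hna hnb).1 hw
        exact ⟨nb, this, hnb⟩
      have h1 : T.path na t := hmin na (hT.label_mem hna) hcand
      have h2 : T.path t na := by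
        obtain ⟨w', hw', hlw'⟩ := hsub (⟨v, Relation.ReflTransGen.refl, hl⟩ : a ∈ T₁.cluster v)
        rwa [hT.label_inj hlw' hna] at hw'
      rw [path_antisymm hT h2 h1]
      exact hna
  choose tm htm using key
  exact ⟨tm, fun v hv => htm v hv⟩

lemma fwd_wte {T₁ : PreTree α V} {T : PreTree α U} {tm : V → U} {n : U → ℕ}
    (hT : T.IsATree) (h₁ : T₁.IsATree) (hs : TmSpec T₁ T tm)
    (hn1 : ∀ t, 1 ≤ n t) (hn : ∀ v ∈ T₁.nodes, rnk T₁ v ≤ n (tm v)) :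
    IsWTE T₁ (blowup T n) (fun v => (tm v, rnk T₁ v)) := by
  -- comparability of nodes with related clusters
  have hcomp : ∀ u ∈ T₁.nodes, ∀ v ∈ T₁.nodes, T₁.cluster v ⊆ T₁.cluster u →
      T₁.path u v ∨ T₁.path v u := by
    intro u hu v hv hsub
    obtain ⟨w, a, hpw, hlw⟩ := exists_labeled_desc h₁ v hv
    have hav : a ∈ T₁.cluster v := ⟨w, hpw, hlw⟩
    obtain ⟨w', hpw', hlw'⟩ := hsub hav
    rw [h₁.label_inj hlw' hlw] at hpw'
    exact anc_comparable h₁ hpw' hpw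
  have hC : ∀ v ∈ T₁.nodes, T.cluster (tm v) ∩ T₁.labelSet = T₁.cluster v :=
    fun v hv => (hs v hv).2.1
  have hCsub : ∀ v ∈ T₁.nodes, T₁.cluster v ⊆ T.cluster (tm v) := by
    intro v hv a ha
    rw [← hC v hv] at ha
    exact ha.1
  refine ⟨?_, ?_, ?_, ?_⟩
  · intro v hv
    exact ⟨(hs v hv).1, rnk_pos T₁ v, hn v hv⟩
  · -- injectivity
    intro u hu v hv heq
    have h1 : tm u = tm v := congrArg Prod.fst heq
    have h2 : rnk T₁ u = rnk T₁ v := congrArg Prod.snd heq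
    have hCeq : T₁.cluster u = T₁.cluster v := by
      rw [← hC u hu, ← hC v hv, h1]
    rcases hcomp u hu v hv hCeq.symm.le with h | h
    · rcases eq_or_ne u v with h' | h'
      · exact h'
      · exact absurd h2 (by have := rnk_lt h₁ hu hv hCeq (pathNT_of_path_ne h₁ h h'); omega)
    · rcases eq_or_ne v u with h' | h'
      · exact h'.symm
      · exact absurd h2 (by have := rnk_lt h₁ hv hu hCeq.symm (pathNT_of_path_ne h₁ h h'); omega)
  · -- labels
    intro v a hl
    have hv : v ∈ T₁.nodes := h₁.label_mem hl
    have h1 : T.label (tm v) = some a := (hs v hv).2.2.2 a hl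
    have h2 : rnk T₁ v = 1 := rnk_labeled h₁ hl
    simp only [blowup, h2]
    simpa using h1
  · -- path iff
    intro u hu v hv
    constructor
    · intro hp
      have hsub : T₁.cluster v ⊆ T₁.cluster u := cluster_antitone hp
      have htp : T.path (tm u) (tm v) :=
        (hs v hv).2.2.1 (tm u) (hs u hu).1 (hsub.trans (hCsub u hu))
      rcases eq_or_ne (tm u) (tm v) with he | he
      · -- same chain
        have hCeq : T₁.cluster u = T₁.cluster v := by rw [← hC u hu, ← hC v hv, he]
        rcases eq_or_ne u v with rfl | hne
        · exact Relation.ReflTransGen.refl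
        · have hlt := rnk_lt h₁ hu hv hCeq (pathNT_of_path_ne h₁ hp hne)
          have : (T.blowup n).path (tm u, rnk T₁ u) (tm u, rnk T₁ v) :=
            blowup_path_down (hs u hu).1 (rnk T₁ u) (rnk T₁ v)
            (rnk_pos T₁ v) (le_of_lt hlt) (hn u hu)
          show (T.blowup n).path (tm u, rnk T₁ u) (tm v, rnk T₁ v)
          rw [← he]
          exact this
      · exact blowup_path_of_pathNT hT hn1 (pathNT_of_path_ne hT htp he) _ _
          (rnk_pos T₁ u) (hn u hu) (rnk_pos T₁ v) (hn v hv)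
    · intro hp
      obtain ⟨htp, hrk⟩ := blowup_path_spec hT hp
      have hsub : T₁.cluster v ⊆ T₁.cluster u := by
        rw [← hC u hu, ← hC v hv]
        exact Set.inter_subset_inter_left _ (cluster_antitone htp)
      rcases hcomp u hu v hv hsub with h | h
      · exact h
      · -- v is an ancestor of u; show u = v
        rcases eq_or_ne v u with rfl | hne
        · exact Relation.ReflTransGen.refl
        · exfalso
          have hsub' : T₁.cluster u ⊆ T₁.cluster v := cluster_antitone h
          have hCeq : T₁.cluster u = T₁.cluster v := Set.Subset.antisymm hsub' hsub
          have hteq : tm u = tm v := tm_eq_of_cluster_eq hT hs hu hv hCeq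
          have hlt := rnk_lt h₁ hv hu hCeq.symm (pathNT_of_path_ne h₁ h hne)
          have := hrk hteq
          simp only at this
          omega

end Helpers


end PreTree

/-- Two 𝒜-trees are ancestrally compatible (some 𝒜-tree ancestrally displays
both) iff they admit weak topological embeddings into a same 𝒜-tree. -/
theorem stmt11 {α V W : Type} (T₁ : PreTree α V) (T₂ : PreTree α W)
    (h₁ : T₁.IsATree) (h₂ : T₂.IsATree) :
    (∃ (U : Type) (T : PreTree α U), T.IsATree ∧
        PreTree.Displays T T₁ ∧ PreTree.Displays T T₂) ↔
      PreTree.AncCompat T₁ T₂ := by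
  constructor
  · rintro ⟨U, T, hT, hd₁, hd₂⟩
    by_cases hTne : T.nodes.Nonempty
    · obtain ⟨t₀, ht₀⟩ := hTne
      obtain ⟨tm₁, hs₁⟩ := PreTree.exists_tmap hT h₁ hd₁ ht₀
      obtain ⟨tm₂, hs₂⟩ := PreTree.exists_tmap hT h₂ hd₂ ht₀
      set n : U → ℕ := fun t =>
        max 1 (max {v | v ∈ T₁.nodes ∧ tm₁ v = t}.ncard {w | w ∈ T₂.nodes ∧ tm₂ w = t}.ncard)
        with hn_def
      have hn1 : ∀ t, 1 ≤ n t := fun t => le_max_left _ _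
      have hnA : ∀ v ∈ T₁.nodes, PreTree.rnk T₁ v ≤ n (tm₁ v) := fun v hv =>
        (PreTree.rnk_le_count hT h₁ hs₁ hv).trans ((le_max_left _ _).trans (le_max_right _ _))
      have hnB : ∀ w ∈ T₂.nodes, PreTree.rnk T₂ w ≤ n (tm₂ w) := fun w hw =>
        (PreTree.rnk_le_count hT h₂ hs₂ hw).trans ((le_max_right _ _).trans (le_max_right _ _))
      exact ⟨U × ℕ, T.blowup n, PreTree.blowup_isATree hT hn1,
        ⟨_, PreTree.fwd_wte hT h₁ hs₁ hn1 hnA⟩,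
        ⟨_, PreTree.fwd_wte hT h₂ hs₂ hn1 hnB⟩⟩
    · -- T has no nodes, hence T₁, T₂ have none either
      have hempty : ∀ {β : Type} (S : PreTree α β), S.IsATree → PreTree.Displays T S →
          S.nodes = ∅ := by
        intro β S hS hd
        by_contra hne
        obtain ⟨v, hv⟩ := Set.nonempty_iff_ne_empty.2 hne
        obtain ⟨w, a, _, hl⟩ := PreTree.exists_labeled_desc hS v hv
        obtain ⟨x, hx⟩ := hd.1 ⟨w, hl⟩
        exact hTne ⟨x, hT.label_mem hx⟩
      have he₁ := hempty T₁ h₁ hd₁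
      have he₂ := hempty T₂ h₂ hd₂
      refine ⟨PUnit, ⟨∅, fun _ _ => False, fun _ => none⟩, ?_, ?_, ?_⟩
      · constructor
        · exact Set.finite_empty
        · intro u v h; exact h.elim
        · intro u v h; exact h.elim
        · intro u v w h; exact h.elim
        · intro u v h; exact h.elim
        · rintro ⟨x, hx⟩; exact hx.elim
        · intro v a h; simp at h
        · intro u v a h; simp at h
        · intro v hv; exact hv.elim
      · refine ⟨fun _ => PUnit.unit, ?_, ?_, ?_, ?_⟩
        · intro v hv; rw [he₁] at hv; exact hv.elim
        · intro u hu; rw [he₁] at hu; exact hu.elim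
        · intro v a hl; exact absurd (h₁.label_mem hl) (by rw [he₁]; exact fun h => h)
        · intro u hu; rw [he₁] at hu; exact hu.elim
      · refine ⟨fun _ => PUnit.unit, ?_, ?_, ?_, ?_⟩
        · intro v hv; rw [he₂] at hv; exact hv.elim
        · intro u hu; rw [he₂] at hu; exact hu.elim
        · intro v a hl; exact absurd (h₂.label_mem hl) (by rw [he₂]; exact fun h => h)
        · intro u hu; rw [he₂] at hu; exact hu.elim
  · rintro ⟨U, T, hT, ⟨f, hf⟩, ⟨g, hg⟩⟩
    exact ⟨U, T, hT, PreTree.displays_of_wte hT h₁ hf, PreTree.displays_of_wte hT h₂ hg⟩
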